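/- Suppose M = ⟨n₁,…,n_k⟩ is a numerical monoid with n₁ < ⋯ < n_k. The minimum factorization length function m : M → ℤ≥0 satisfies m(a + n_k) = m(a) + 1 for all a ∈ M with a > n_{k−1}·n_k. -/

import Mathlib

open scoped Classical

/-- Membership in the additive submonoid of `ℕ` generated by `r 0, …, r (k-1)`. -/
def memGen {k : ℕ} (r : Fin k → ℕ) (a : ℕ) : Prop :=
  ∃ z : Fin k → ℕ, a = ∑ i, z i * r i

/-- The Apéry set `Ap(S; x) = {m ∈ S : m - x ∉ S}` (subtraction in `ℤ`,
encoded by the guard `x ≤ m`). -/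
def aperySet {k : ℕ} (r : Fin k → ℕ) (x : ℕ) : Set ℕ :=
  {m | memGen r m ∧ ¬(x ≤ m ∧ memGen r (m - x))}

/-- The set of factorization lengths of `a` in the monoid generated by `r`. -/
def lenSet {k : ℕ} (r : Fin k → ℕ) (a : ℕ) : Set ℕ :=
  {ℓ | ∃ z : Fin k → ℕ, a = ∑ i, z i * r i ∧ ℓ = ∑ i, z i}

/-- The minimum factorization length of `a` in the monoid generated by `r`. -/
noncomputable def minLen {k : ℕ} (r : Fin k → ℕ) (a : ℕ) : ℕ :=
  sInf (lenSet r a)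

/-- The generators `n, n + r 0, …, n + r (k-1)` of the shifted monoid `M_n`. -/
def shiftGen {k : ℕ} (n : ℕ) (r : Fin k → ℕ) : Fin (k + 1) → ℕ :=
  Fin.cons n (fun i => n + r i)

/-- The genus: the number of gaps of the monoid generated by `r`. -/
noncomputable def genus {k : ℕ} (r : Fin k → ℕ) : ℕ :=
  Set.ncard {m : ℕ | ¬ memGen r m}

/-- The Frobenius number: the largest gap of the monoid generated by `r`. -/
noncomputable def frob {k : ℕ} (r : Fin k → ℕ) : ℕ :=
  sSup {m : ℕ | ¬ memGen r m}

/-- The set of pseudo-Frobenius numbers of the monoid generated by `r`. -/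
def pseudoFrob {k : ℕ} (r : Fin k → ℕ) : Set ℕ :=
  {m | ¬ memGen r m ∧ ∀ x : ℕ, memGen r x → 0 < x → memGen r (m + x)}

section test
variable {m : ℕ}

lemma sum_count_mul (g : Fin m → ℕ) (L : List (Fin m)) :
    ∑ i, L.count i * g i = (L.map g).sum := by
  induction L with
  | nil => simp
  | cons a L ih =>
    have h : ∀ i : Fin m, ((a :: L).count i) * g i
        = L.count i * g i + if i = a then g i else 0 := by
      intro i
      rcases eq_or_ne i a with h | h <;> simp [List.count_cons, h, Nat.add_mul] <;> intro h' <;> exact absurd h'.symm h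
    rw [Finset.sum_congr rfl fun i _ => h i, Finset.sum_add_distrib, ih,
      Finset.sum_ite_eq' Finset.univ a g]
    simp [Nat.add_comm]

lemma sum_count (L : List (Fin m)) : ∑ i, L.count i = L.length := by
  simpa using sum_count_mul (fun _ => 1) L

lemma exists_atom_list (g : Fin m → ℕ) (z : Fin m → ℕ) :
    ∃ L : List (Fin m), (L.map g).sum = ∑ i, z i * g i ∧
      L.length = ∑ i, z i ∧ ∀ j ∈ L, z j ≠ 0 := by
  refine ⟨(List.ofFn fun i => List.replicate (z i) i).flatten, ?_, ?_, ?_⟩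
  · simp [List.map_flatten, List.map_ofFn, Function.comp_def, List.sum_flatten, List.sum_ofFn]
  · simp [List.length_flatten, List.map_ofFn, Function.comp_def, List.sum_ofFn]
  · intro j hj
    simp only [List.mem_flatten, List.mem_ofFn] at hj
    obtain ⟨l, ⟨i, rfl⟩, hjl⟩ := hj
    obtain ⟨hiz, rfl⟩ := List.mem_replicate.mp hjl
    exact hiz

lemma sum_add_ite_mul (g z : Fin m → ℕ) (i0 : Fin m) (c : ℕ) :
    ∑ i, (z i + if i = i0 then c else 0) * g i = (∑ i, z i * g i) + c * g i0 := by
  have h : ∀ i : Fin m, (z i + if i = i0 then c else 0) * g i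
      = z i * g i + (if i = i0 then c * g i else 0) := by
    intro i; rcases eq_or_ne i i0 with h | h <;> simp [h, Nat.add_mul]
  rw [Finset.sum_congr rfl fun i _ => h i, Finset.sum_add_distrib,
    Finset.sum_ite_eq' Finset.univ i0 (fun i => c * g i)]
  simp

lemma sum_add_ite (z : Fin m → ℕ) (i0 : Fin m) (c : ℕ) :
    ∑ i, (z i + if i = i0 then c else 0) = (∑ i, z i) + c := by
  simpa using sum_add_ite_mul (fun _ => 1) z i0 c
end test

lemma exists_shorter {k : ℕ} (g : Fin (k + 2) → ℕ) (hmono : StrictMono g) (hpos : 0 < g 0)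
    (b : ℕ) (z : Fin (k + 2) → ℕ) (hb : b = ∑ i, z i * g i)
    (hzlast : z (Fin.last (k + 1)) = 0)
    (hbig : g (Fin.castSucc (Fin.last k)) * g (Fin.last (k + 1)) < b) :
    ∃ z' : Fin (k + 2) → ℕ, b = ∑ i, z' i * g i ∧ ∑ i, z' i < ∑ i, z i := by
  classical
  set P := g (Fin.castSucc (Fin.last k)) with hPdef
  set N := g (Fin.last (k + 1)) with hNdef
  have hPN : P < N := hmono (Fin.castSucc_lt_last (Fin.last k))
  have hP0 : 0 < P := hpos.trans_le (hmono.monotone (Fin.zero_le _))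
  have hN0 : 0 < N := hP0.trans hPN
  obtain ⟨L, hLsum, hLlen, hLmem⟩ := exists_atom_list g z
  have hatom : ∀ j ∈ L, g j ≤ P := by
    intro j hj
    have hjne : j ≠ Fin.last (k + 1) := fun h => hLmem j hj (h ▸ hzlast)
    have hv : (j : ℕ) ≤ k := by
      have h1 := j.isLt
      have h2 : (j : ℕ) ≠ k + 1 := fun h => hjne (Fin.ext h)
      omega
    exact hmono.monotone (by simpa [Fin.le_def] using hv)
  have hbound : b ≤ L.length * P := by
    calc b = (L.map g).sum := by rw [hLsum, ← hb]
    _ ≤ (L.map g).length • P := List.sum_le_card_nsmul _ _ (by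
        intro x hx
        obtain ⟨j, hjL, rfl⟩ := List.mem_map.mp hx
        exact hatom j hjL)
    _ = L.length * P := by simp [smul_eq_mul]
  have hlen : N < L.length := by
    by_contra hc
    push_neg at hc
    have : b ≤ N * P := le_trans hbound (by nlinarith)
    nlinarith
  haveI : NeZero N := ⟨hN0.ne'⟩
  obtain ⟨x, y, hxy, hfeq⟩ := Fintype.exists_ne_map_eq_of_card_lt
      (fun t : Fin (N + 1) => ((((L.take t).map g).sum : ℕ) : ZMod N))
      (by simp [ZMod.card])
  obtain ⟨s, t, hst, heq⟩ : ∃ s t : Fin (N + 1), s < t ∧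
      ((((L.take s).map g).sum : ℕ) : ZMod N) = ((((L.take t).map g).sum : ℕ) : ZMod N) := by
    rcases (Ne.lt_or_gt hxy) with h | h
    · exact ⟨x, y, h, hfeq⟩
    · exact ⟨y, x, h, hfeq.symm⟩
  set s' := (s : ℕ) with hs'
  set t' := (t : ℕ) with ht'
  have hst' : s' < t' := hst
  have ht'N : t' ≤ N := by omega
  have ht'len : t' ≤ L.length := by omega
  set seg := (L.take t').drop s' with hsegdef
  have hsplit : L.take t' = L.take s' ++ seg := by
    conv_lhs => rw [← List.take_append_drop s' (L.take t')]
    rw [List.take_take, min_eq_left hst'.le]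
  have hseglen : seg.length = t' - s' := by
    simp only [hsegdef, List.length_drop, List.length_take]
    omega
  have hsum_t : ((L.take t').map g).sum = ((L.take s').map g).sum + ((seg).map g).sum := by
    rw [hsplit, List.map_append, List.sum_append]
  have hdvd : N ∣ (seg.map g).sum := by
    have h0 : (((seg.map g).sum : ℕ) : ZMod N) = 0 := by
      have h := heq
      rw [hsum_t, Nat.cast_add] at h
      exact (left_eq_add.mp h)
    exact (ZMod.natCast_eq_zero_iff _ _).mp h0
  obtain ⟨d, hd⟩ := hdvd
  have hsegsub : ∀ j ∈ seg, j ∈ L := fun j hj =>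
    List.mem_of_mem_take (List.mem_of_mem_drop hj)
  have hsegpos : 0 < (seg.map g).sum := by
    obtain ⟨hdj, tl, hcons⟩ := List.exists_cons_of_ne_nil
      (List.ne_nil_of_length_pos (by omega : 0 < seg.length))
    have : 0 < g hdj := hpos.trans_le (hmono.monotone (Fin.zero_le _))
    rw [hcons]
    simp only [List.map_cons, List.sum_cons]
    omega
  have hsegbound : (seg.map g).sum ≤ (t' - s') * P := by
    calc (seg.map g).sum ≤ (seg.map g).length • P := List.sum_le_card_nsmul _ _ (by
          intro x hx
          obtain ⟨j, hjL, rfl⟩ := List.mem_map.mp hx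
          exact hatom j (hsegsub j hjL))
    _ = (t' - s') * P := by simp [hseglen, smul_eq_mul]
  have hd_pos : 0 < d := by
    rcases Nat.eq_zero_or_pos d with h | h
    · rw [h, Nat.mul_zero] at hd; omega
    · exact h
  have hd_lt : d < t' - s' := by nlinarith
  set L' := L.take s' ++ L.drop t' with hL'def
  have hL'sum : (L'.map g).sum + (seg.map g).sum = b := by
    have htot : b = ((L.take t').map g).sum + ((L.drop t').map g).sum := by
      rw [← List.sum_append, ← List.map_append, List.take_append_drop, hLsum, ← hb]
    rw [hsum_t] at htot
    simp only [hL'def, List.map_append, List.sum_append]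
    omega
  have hL'len : L'.length + (t' - s') = L.length := by
    simp only [hL'def, List.length_append, List.length_take, List.length_drop]
    omega
  refine ⟨fun i => L'.count i + if i = Fin.last (k + 1) then d else 0, ?_, ?_⟩
  · rw [sum_add_ite_mul, sum_count_mul, ← hNdef, mul_comm d N, ← hd]
    omega
  · rw [sum_add_ite, sum_count, ← hLlen]
    omega

/-- For a numerical monoid `M = ⟨n₁,…,n_k⟩` with `n₁ < ⋯ < n_k` (at least
two generators, so that `n_{k-1}` exists), the minimum length function satisfies
`m(a + n_k) = m(a) + 1` for all `a ∈ M` with `a > n_{k-1}·n_k`. -/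
theorem minLen_quasilinear {k : ℕ} (g : Fin (k + 2) → ℕ)
    (hmono : StrictMono g) (hpos : 0 < g 0)
    (a : ℕ) (ha : memGen g a)
    (hbig : a > g (Fin.castSucc (Fin.last k)) * g (Fin.last (k + 1))) :
    minLen g (a + g (Fin.last (k + 1))) = minLen g a + 1 := by
  classical
  set N := g (Fin.last (k + 1)) with hNdef
  obtain ⟨z0, hz0⟩ := ha
  have hne_a : (lenSet g a).Nonempty := ⟨∑ i, z0 i, z0, hz0, rfl⟩
  have hne_b : (lenSet g (a + N)).Nonempty := by
    refine ⟨(∑ i, z0 i) + 1, fun i => z0 i + if i = Fin.last (k + 1) then 1 else 0, ?_, ?_⟩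
    · rw [sum_add_ite_mul, ← hz0, one_mul]
    · rw [sum_add_ite]
  have hmem_a : minLen g a ∈ lenSet g a := Nat.sInf_mem hne_a
  obtain ⟨za, hza, hzalen⟩ := hmem_a
  have h1 : minLen g (a + N) ≤ minLen g a + 1 := by
    apply Nat.sInf_le
    exact ⟨fun i => za i + if i = Fin.last (k + 1) then 1 else 0,
      by rw [sum_add_ite_mul, ← hza, one_mul], by rw [sum_add_ite, hzalen]⟩
  have hmem_b : minLen g (a + N) ∈ lenSet g (a + N) := Nat.sInf_mem hne_b
  obtain ⟨zb, hzb, hzblen⟩ := hmem_b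
  have hzblast : zb (Fin.last (k + 1)) ≠ 0 := by
    intro h0
    obtain ⟨z', hz'sum, hz'lt⟩ := exists_shorter g hmono hpos (a + N) zb hzb h0
      (hbig.trans_le (Nat.le_add_right a N))
    have hle : minLen g (a + N) ≤ ∑ i, z' i := Nat.sInf_le ⟨z', hz'sum, rfl⟩
    omega
  have h2 : minLen g a + 1 ≤ minLen g (a + N) := by
    set z' := fun i => zb i - if i = Fin.last (k + 1) then 1 else 0 with hz'def
    have hzb' : ∀ i, zb i = z' i + if i = Fin.last (k + 1) then 1 else 0 := by
      intro i
      rcases eq_or_ne i (Fin.last (k + 1)) with h | h <;> simp [hz'def, h] <;> omega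
    have hsum : a + N = (∑ i, z' i * g i) + N := by
      calc a + N = ∑ i, zb i * g i := hzb
      _ = ∑ i, (z' i + if i = Fin.last (k + 1) then 1 else 0) * g i :=
          Finset.sum_congr rfl fun i _ => by rw [← hzb' i]
      _ = (∑ i, z' i * g i) + N := by rw [sum_add_ite_mul, one_mul]
    have hlen : ∑ i, zb i = (∑ i, z' i) + 1 := by
      calc ∑ i, zb i = ∑ i, (z' i + if i = Fin.last (k + 1) then 1 else 0) :=
          Finset.sum_congr rfl fun i _ => hzb' i
      _ = (∑ i, z' i) + 1 := sum_add_ite z' _ 1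
    have ha' : a = ∑ i, z' i * g i := by omega
    have hle : minLen g a ≤ ∑ i, z' i := Nat.sInf_le ⟨z', ha', rfl⟩
    omega
  omega
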